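/- The combinatorial fusion of two simple qq-characters is commutative and independent of the choice of base monomials: if χ₁, χ₂ are simple qq-characters with chosen base monomials m₀∈χ₁, n₀∈χ₂, then (m,n)_{m₀,n₀} = (n,m)_{n₀,m₀} for all m∈χ₁, n∈χ₂, and changing the base monomials shifts all pairings by a common constant, so that χ₁*χ₂ = χ₂*χ₁ is well defined. -/
import Mathlib


/-! Statement 5: the relative pairing of monomials of two simple qq-characters is symmetric,
and changing the base monomials shifts all pairings by a common constant, so that the
combinatorial fusion `χ₁*χ₂ = χ₂*χ₁` is well defined.

The group `Γ` of monomials `σ` is written additively; the Laurent ring `R` is modelled as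
`Γ →₀ ℤ`, the constant term of `x : Γ →₀ ℤ` being `x 0`.  Monomials in the `Y_{i,σ}` are
exponent vectors `(I × Γ) →₀ ℤ`. -/

/-- Exponent vectors of monomials in the variables `Y_{i,σ}`. -/
abbrev YMon (I Γ : Type*) : Type _ := (I × Γ) →₀ ℤ

/-- The combinatorial left contraction `l_{i,σ₀}`: `l_{i,σ₀}(Y_{j,τ}) = δ_{ij}(q-q⁻¹)τσ₀⁻¹`,
with values in the Laurent ring `Γ →₀ ℤ`. -/
noncomputable def lcon {I Γ : Type*} [DecidableEq I] [AddCommGroup Γ]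
    (q : Γ) (i : I) (σ₀ : Γ) (m : YMon I Γ) : Γ →₀ ℤ :=
  m.sum fun p c =>
    c • (if p.1 = i then Finsupp.single (q + p.2 - σ₀) 1 - Finsupp.single (-q + p.2 - σ₀) 1
         else 0)

/-- The combinatorial right contraction `r_{i,σ₀}`: `r_{i,σ₀}(Y_{j,τ}) = -δ_{ij}(q-q⁻¹)τ⁻¹σ₀`. -/
noncomputable def rcon {I Γ : Type*} [DecidableEq I] [AddCommGroup Γ]
    (q : Γ) (i : I) (σ₀ : Γ) (m : YMon I Γ) : Γ →₀ ℤ :=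
  m.sum fun p c =>
    c • (if p.1 = i then -(Finsupp.single (q + σ₀ - p.2) 1 - Finsupp.single (-q + σ₀ - p.2) 1)
         else 0)

/-- The shifted affine root `A_{j,τ}`. -/
noncomputable def affRoot {I Γ : Type*} [Fintype I] [AddCommGroup Γ]
    (σm : I → I → Γ) (j : I) (τ : Γ) : YMon I Γ :=
  ∑ i : I, (Finsupp.single (i, σm i j + τ) (1 : ℤ) - Finsupp.single (i, -σm i j + τ) 1)

/-- The monomial `x₀ · Π_j A_{i_j,σ_j}^{c_j}`. -/
noncomputable def monoOf {I Γ J : Type*} [Fintype I] [Fintype J] [AddCommGroup Γ]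
    (σm : I → I → Γ) (idx : J → I) (sh : J → Γ) (x0 : YMon I Γ) (c : J → ℤ) : YMon I Γ :=
  x0 + ∑ j : J, c j • affRoot σm (idx j) (sh j)

/-- The relative pairing `(m,n)_{m₀,n₀}`: the constant term of
`Σ_j (a_j l_{i_j,σ_j}(n₀) + b_j r_{i_j,σ_j}(m))`, where `m = m₀ Π A^{a_j}`,
`n = n₀ Π A^{b_j}`. -/
noncomputable def pairing {I Γ J : Type*} [Fintype I] [DecidableEq I] [Fintype J]
    [AddCommGroup Γ]
    (q : Γ) (σm : I → I → Γ) (idx : J → I) (sh : J → Γ) (m0 n0 : YMon I Γ)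
    (a b : J → ℤ) : ℤ :=
  (∑ j : J,
      (a j • lcon q (idx j) (sh j) n0
        + b j • rcon q (idx j) (sh j) (monoOf σm idx sh m0 a))) 0

section Aux
variable {I Γ : Type*} [DecidableEq I] [AddCommGroup Γ]

noncomputable def ctcon (q : Γ) (i : I) (σ₀ : Γ) : YMon I Γ →+ ℤ :=
  Finsupp.liftAddHom fun p => zmultiplesHom ℤ
    (((if p.1 = i then Finsupp.single (q + p.2 - σ₀) (1 : ℤ)
          - Finsupp.single (-q + p.2 - σ₀) 1 else 0) : Γ →₀ ℤ) 0)

lemma ctcon_eq_sum (q : Γ) (i : I) (σ₀ : Γ) (m : YMon I Γ) :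
    ctcon q i σ₀ m = m.sum fun p c => c *
      (((if p.1 = i then Finsupp.single (q + p.2 - σ₀) (1 : ℤ)
          - Finsupp.single (-q + p.2 - σ₀) 1 else 0) : Γ →₀ ℤ) 0) := by
  simp [ctcon, Finsupp.liftAddHom_apply, Finsupp.sum, zmultiplesHom_apply, smul_eq_mul]

lemma lcon_apply_zero (q : Γ) (i : I) (σ₀ : Γ) (m : YMon I Γ) :
    lcon q i σ₀ m 0 = ctcon q i σ₀ m := by
  rw [ctcon_eq_sum, lcon, Finsupp.sum_apply]
  exact Finsupp.sum_congr fun p _ => by rw [Finsupp.smul_apply, smul_eq_mul]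

lemma rcon_apply_zero (q : Γ) (i : I) (σ₀ : Γ) (m : YMon I Γ) :
    rcon q i σ₀ m 0 = ctcon q i σ₀ m := by
  classical
  rw [ctcon_eq_sum, rcon, Finsupp.sum_apply]
  refine Finsupp.sum_congr fun p _ => ?_
  rw [Finsupp.smul_apply, smul_eq_mul]
  congr 1
  by_cases h : p.1 = i
  · rw [if_pos h, if_pos h]
    have h1 : (q + σ₀ - p.2 = 0) ↔ (-q + p.2 - σ₀ = 0) := by
      constructor <;> intro hx
      · have : -q + p.2 - σ₀ = -(q + σ₀ - p.2) := by abel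
        rw [this, hx, neg_zero]
      · have : q + σ₀ - p.2 = -(-q + p.2 - σ₀) := by abel
        rw [this, hx, neg_zero]
    have h2 : (-q + σ₀ - p.2 = 0) ↔ (q + p.2 - σ₀ = 0) := by
      constructor <;> intro hx
      · have : q + p.2 - σ₀ = -(-q + σ₀ - p.2) := by abel
        rw [this, hx, neg_zero]
      · have : -q + σ₀ - p.2 = -(q + p.2 - σ₀) := by abel
        rw [this, hx, neg_zero]
    rw [Finsupp.neg_apply, Finsupp.sub_apply, Finsupp.sub_apply,
      Finsupp.single_apply, Finsupp.single_apply, Finsupp.single_apply, Finsupp.single_apply]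
    split_ifs <;> simp_all
  · rw [if_neg h, if_neg h]

open Classical in
/-- `dd q x` is the constant term of `(q - q⁻¹) x` : `[x = -q] - [x = q]`. -/
noncomputable def dd (q x : Γ) : ℤ :=
  (if x = -q then 1 else 0) - (if x = q then 1 else 0)

lemma dd_neg (q x : Γ) : dd q (-x) = - dd q x := by
  classical
  unfold dd
  have h1 : (-x = -q) ↔ (x = q) := neg_inj
  have h2 : (-x = q) ↔ (x = -q) := by rw [← neg_inj, neg_neg]
  rw [if_congr h1 rfl rfl, if_congr h2 rfl rfl]
  ring

lemma esub (q σ₀ x : Γ) :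
    ((Finsupp.single (q + x - σ₀) (1 : ℤ) - Finsupp.single (-q + x - σ₀) 1) : Γ →₀ ℤ) 0
      = dd q (x - σ₀) := by
  classical
  rw [Finsupp.sub_apply, Finsupp.single_apply, Finsupp.single_apply]
  unfold dd
  have h1 : (q + x - σ₀ = 0) ↔ (x - σ₀ = -q) := by
    constructor <;> intro hx
    · have : x - σ₀ = -q + (q + x - σ₀) := by abel
      rw [this, hx, add_zero]
    · have : q + x - σ₀ = q + (x - σ₀) := by abel
      rw [this, hx, add_neg_cancel]
  have h2 : (-q + x - σ₀ = 0) ↔ (x - σ₀ = q) := by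
    constructor <;> intro hx
    · have : x - σ₀ = q + (-q + x - σ₀) := by abel
      rw [this, hx, add_zero]
    · have : -q + x - σ₀ = -q + (x - σ₀) := by abel
      rw [this, hx, neg_add_cancel]
  rw [if_congr h1 rfl rfl, if_congr h2 rfl rfl]

lemma ctcon_single (q : Γ) (i : I) (σ₀ : Γ) (p : I × Γ) (c : ℤ) :
    ctcon q i σ₀ (Finsupp.single p c)
      = c * (if p.1 = i then dd q (p.2 - σ₀) else 0) := by
  rw [ctcon, Finsupp.liftAddHom_apply_single, zmultiplesHom_apply, smul_eq_mul]
  congr 1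
  by_cases h : p.1 = i
  · rw [if_pos h, if_pos h, esub]
  · rw [if_neg h, if_neg h, Finsupp.coe_zero, Pi.zero_apply]

variable [Fintype I]

lemma ctcon_affRoot (q : Γ) (σm : I → I → Γ) (i : I) (σ₀ : Γ) (j : I) (τ : Γ) :
    ctcon q i σ₀ (affRoot σm j τ)
      = dd q (σm i j + τ - σ₀) - dd q (-σm i j + τ - σ₀) := by
  classical
  rw [affRoot, map_sum]
  have : ∀ i' : I,
      ctcon q i σ₀ (Finsupp.single (i', σm i' j + τ) (1 : ℤ)
          - Finsupp.single (i', -σm i' j + τ) 1)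
        = if i' = i then dd q (σm i' j + τ - σ₀) - dd q (-σm i' j + τ - σ₀) else 0 := by
    intro i'
    rw [map_sub, ctcon_single, ctcon_single]
    by_cases h : i' = i <;> simp [h]
  rw [Finset.sum_congr rfl fun i' _ => this i', Finset.sum_ite_eq' Finset.univ i
    (fun i' => dd q (σm i' j + τ - σ₀) - dd q (-σm i' j + τ - σ₀)), if_pos (Finset.mem_univ i)]

lemma ctcon_affRoot_symm (q : Γ) (σm : I → I → Γ) (hsym : ∀ i j, σm i j = σm j i)
    (i : I) (σ₀ : Γ) (j : I) (τ : Γ) :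
    ctcon q i σ₀ (affRoot σm j τ) = ctcon q j τ (affRoot σm i σ₀) := by
  rw [ctcon_affRoot, ctcon_affRoot, hsym j i]
  have e1 : σm i j + σ₀ - τ = -(-σm i j + τ - σ₀) := by abel
  have e2 : -σm i j + σ₀ - τ = -(σm i j + τ - σ₀) := by abel
  rw [e1, e2, dd_neg, dd_neg]
  ring

end Aux

section Pair
variable {I Γ J : Type*} [Fintype I] [DecidableEq I] [Fintype J] [AddCommGroup Γ]
variable (q : Γ) (σm : I → I → Γ) (idx : J → I) (sh : J → Γ)

lemma ctcon_monoOf (i : I) (σ₀ : Γ) (x0 : YMon I Γ) (c : J → ℤ) :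
    ctcon q i σ₀ (monoOf σm idx sh x0 c)
      = ctcon q i σ₀ x0 + ∑ k : J, c k * ctcon q i σ₀ (affRoot σm (idx k) (sh k)) := by
  rw [monoOf, map_add, map_sum]
  congr 1
  exact Finset.sum_congr rfl fun k _ => by rw [map_zsmul, smul_eq_mul]

lemma pairing_eq (m0 n0 : YMon I Γ) (a b : J → ℤ) :
    pairing q σm idx sh m0 n0 a b
      = (∑ j : J, a j * ctcon q (idx j) (sh j) n0)
        + (∑ j : J, b j * ctcon q (idx j) (sh j) m0)
        + ∑ j : J, ∑ k : J,
            b j * (a k * ctcon q (idx j) (sh j) (affRoot σm (idx k) (sh k))) := by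
  rw [pairing, Finsupp.finset_sum_apply]
  have : ∀ j : J,
      (a j • lcon q (idx j) (sh j) n0
        + b j • rcon q (idx j) (sh j) (monoOf σm idx sh m0 a)) 0
      = a j * ctcon q (idx j) (sh j) n0
        + (b j * ctcon q (idx j) (sh j) m0
          + ∑ k : J, b j * (a k * ctcon q (idx j) (sh j) (affRoot σm (idx k) (sh k)))) := by
    intro j
    rw [Finsupp.add_apply, Finsupp.smul_apply, Finsupp.smul_apply, smul_eq_mul, smul_eq_mul,
      lcon_apply_zero, rcon_apply_zero, ctcon_monoOf, mul_add, Finset.mul_sum]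
  rw [Finset.sum_congr rfl fun j _ => this j, Finset.sum_add_distrib, Finset.sum_add_distrib,
    add_assoc]

end Pair

theorem statement5 {I Γ J : Type*} [Fintype I] [DecidableEq I] [Fintype J] [AddCommGroup Γ]
    (q : Γ) (σm : I → I → Γ)
    (hsym : ∀ i j, σm i j = σm j i) (hdiag : ∀ i, σm i i = q)
    (idx : J → I) (sh : J → Γ) (m0 n0 : YMon I Γ) :
    (∀ a b : J → ℤ,
      pairing q σm idx sh m0 n0 a b = pairing q σm idx sh n0 m0 b a) ∧
    (∀ a b a0 b0 : J → ℤ,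
      pairing q σm idx sh (monoOf σm idx sh m0 a0) (monoOf σm idx sh n0 b0)
          (a - a0) (b - b0)
        = pairing q σm idx sh m0 n0 a b - pairing q σm idx sh m0 n0 a0 b0) := by
  have sw : ∀ x y : J → ℤ,
      (∑ j : J, ∑ k : J,
        x j * (y k * ctcon q (idx j) (sh j) (affRoot σm (idx k) (sh k))))
      = ∑ j : J, ∑ k : J,
        y j * (x k * ctcon q (idx j) (sh j) (affRoot σm (idx k) (sh k))) := by
    intro x y
    rw [Finset.sum_comm]
    refine Finset.sum_congr rfl fun j _ => Finset.sum_congr rfl fun k _ => ?_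
    rw [ctcon_affRoot_symm q σm hsym]
    ring
  constructor
  · intro a b
    rw [pairing_eq, pairing_eq, sw b a]
    ring
  · intro a b a0 b0
    rw [pairing_eq, pairing_eq, pairing_eq]
    simp only [Pi.sub_apply, ctcon_monoOf, mul_add, sub_mul, mul_sub, Finset.mul_sum,
      Finset.sum_add_distrib, Finset.sum_sub_distrib]
    rw [sw a b0, sw a0 b0]
    abel
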